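/- Let ζ₉ ∈ ℂ be a primitive ninth root of unity and let ℚ(ζ₉) ⊆ ℂ be the ninth cyclotomic field. Then the polynomial X¹⁸ + 4 is irreducible over ℚ(ζ₉). -/

import Mathlib

open Polynomial IntermediateField

private lemma cycext (ζ : ℂ) (hζ : IsPrimitiveRoot ζ 9) :
    IsCyclotomicExtension {9} ℚ ℚ⟮ζ⟯ := by
  have hQ : IsIntegral ℚ ζ := (hζ.isIntegral (by norm_num)).tower_top
  have h1 : IsCyclotomicExtension {9} ℚ (Algebra.adjoin ℚ ({ζ} : Set ℂ)) :=
    IsPrimitiveRoot.adjoin_isCyclotomicExtension (n := 9) ℚ hζ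
  exact IsCyclotomicExtension.equiv _ _ _
    (Subalgebra.equivOfEq _ _ (adjoin_simple_toSubalgebra_of_isAlgebraic hQ.isAlgebraic).symm)

/-- Key lemma: if some element of `ℚ(ζ₉)` has `e`-th power `-4`, then `-4` is an
`e`-th power mod 19. -/
private lemma key (ζ : ℂ) (hζ : IsPrimitiveRoot ζ 9) (e : ℕ) (he : e ≠ 0) (c : ℚ⟮ζ⟯)
    (hc : c ^ e = -4) : ∃ x : ZMod 19, x ^ e + 4 = 0 := by
  haveI := cycext ζ hζ
  haveI : Fact (Nat.Prime 3) := ⟨by norm_num⟩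
  have h9 : ((3 : ℕ) ^ 2 : ℕ) = 9 := by decide
  haveI : IsCyclotomicExtension {(3 : ℕ) ^ 2} ℚ ℚ⟮ζ⟯ := by rw [h9]; infer_instance
  -- the generator as an element of the intermediate field
  set ζK : ℚ⟮ζ⟯ := AdjoinSimple.gen ℚ ζ with hζK
  have hζK9 : IsPrimitiveRoot ζK ((3 : ℕ) ^ 2 : ℕ) := by
    rw [h9]
    exact hζ.of_map_of_injective (algebraMap ℚ⟮ζ⟯ ℂ).injective
  have hic := IsCyclotomicExtension.Rat.isIntegralClosure_adjoin_singleton_of_prime_pow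
    (p := 3) (k := 2) hζK9
  -- `c` is integral over ℤ
  have hint : IsIntegral ℤ c := by
    refine ⟨X ^ e + C 4, (monic_X_pow e).add_of_left ?_, ?_⟩
    · simpa using (degree_C_le (a := (4 : ℤ))).trans_lt
        (by exact_mod_cast Nat.pos_of_ne_zero he : (0 : WithBot ℕ) < e)
    · simp [hc]
  obtain ⟨y, hy⟩ := (IsIntegralClosure.isIntegral_iff
    (A := Algebra.adjoin ℤ ({ζK} : Set ℚ⟮ζ⟯))).mp hint
  have hcmem : c ∈ Algebra.adjoin ℤ ({ζK} : Set ℚ⟮ζ⟯) := hy ▸ y.2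
  rw [Algebra.adjoin_singleton_eq_range_aeval] at hcmem
  obtain ⟨A, hA⟩ := hcmem
  -- push the relation to ℂ
  have h1 : Polynomial.aeval ζK A = c := hA
  have hAc : Polynomial.aeval (algebraMap ℚ⟮ζ⟯ ℂ ζK) A = (c : ℂ) := by
    rw [Polynomial.aeval_algebraMap_apply, h1]; rfl
  rw [hζK, AdjoinSimple.algebraMap_gen] at hAc
  have hroot : Polynomial.aeval ζ (A ^ e + C 4) = 0 := by
    have : ((c : ℂ)) ^ e = -4 := by
      have := congrArg (algebraMap ℚ⟮ζ⟯ ℂ) hc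
      push_cast at this
      exact this.trans rfl
    simp [map_ofNat, hAc, this]
  have hdvd : Polynomial.cyclotomic 9 ℤ ∣ A ^ e + C 4 := by
    rw [Polynomial.cyclotomic_eq_minpoly hζ (by norm_num)]
    exact minpoly.isIntegrallyClosed_dvd (hζ.isIntegral (by norm_num)) hroot
  obtain ⟨R, hR⟩ := hdvd
  have hev := congrArg (Polynomial.eval (4 : ℤ)) hR
  simp only [Polynomial.eval_add, Polynomial.eval_pow, Polynomial.eval_C,
    Polynomial.eval_mul] at hev
  have hcyc : Polynomial.eval (4 : ℤ) (Polynomial.cyclotomic 9 ℤ) = 4161 := by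
    rw [show (9 : ℕ) = 3 ^ (1 + 1) by norm_num,
      Polynomial.cyclotomic_prime_pow_eq_geom_sum (by norm_num : Nat.Prime 3)]
    simp [Finset.sum_range_succ]
  rw [hcyc] at hev
  refine ⟨((A.eval 4 : ℤ) : ZMod 19), ?_⟩
  have h2 := congrArg (fun z : ℤ => (z : ZMod 19)) hev
  push_cast at h2
  rw [h2, show ((4161 : ZMod 19)) = 0 from by decide, zero_mul]

set_option synthInstance.maxHeartbeats 1000000 in
theorem X_pow_eighteen_add_four_irreducible_over_ninth_cyclotomic
    (ζ : ℂ) (hζ : IsPrimitiveRoot ζ 9) :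
    Irreducible ((X : Polynomial ℚ⟮ζ⟯) ^ 18 + 4) := by
  have F1 : ∀ b : ℚ⟮ζ⟯, b ^ 2 ≠ -4 := by
    intro b hb
    obtain ⟨x, hx⟩ := key ζ hζ 2 (by norm_num) b hb
    revert hx
    revert x
    decide
  have F2 : ∀ b : ℚ⟮ζ⟯, b ^ 3 ≠ -4 := by
    intro b hb
    obtain ⟨x, hx⟩ := key ζ hζ 3 (by norm_num) b hb
    revert hx
    revert x
    decide
  have h : (X : Polynomial ℚ⟮ζ⟯) ^ 18 + 4 = X ^ (2 * 9) - C (-4) := by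
    rw [map_neg, sub_neg_eq_add, map_ofNat]
  rw [h]
  apply X_pow_mul_sub_C_irreducible
  · apply X_pow_sub_C_irreducible_of_odd ⟨4, by norm_num⟩
    intro p hp hpdvd b hb
    have hp3 : p = 3 := by
      rw [show (9 : ℕ) = 3 ^ 2 from by norm_num] at hpdvd
      exact (Nat.prime_dvd_prime_iff_eq hp (by norm_num)).mp (hp.dvd_of_dvd_pow hpdvd)
    subst hp3
    exact F2 b hb
  · intro E _ _ x hx
    have hxi : IsIntegral ℚ⟮ζ⟯ x := by
      by_contra hne
      rw [minpoly.eq_zero hne] at hx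
      exact X_pow_sub_C_ne_zero (by norm_num) _ hx.symm
    apply X_pow_sub_C_irreducible_of_prime Nat.prime_two
    intro y hy
    apply F1 (Algebra.norm ℚ⟮ζ⟯ y)
    rw [← map_pow, hy, ← IntermediateField.adjoin.powerBasis_gen hxi,
      Algebra.PowerBasis.norm_gen_eq_coeff_zero_minpoly]
    simp [IntermediateField.minpoly_gen, hx]
    norm_num
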